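/- Let a₁ ∈ [0,1] and define f : 𝔻 → 𝔹_n (n ≥ 2) by f(λ) = (a₁λ, √(1−a₁²)λ², 0, …, 0). Then the function F(z) = z₁²/(2−a₁²) + (2√(1−a₁²)/(2−a₁²))·z₂ maps 𝔹_n holomorphically into 𝔻 and satisfies F(f(λ)) = λ² for all λ ∈ 𝔻; hence f is a 3-complex geodesic. -/

import Mathlib

open Complex Metric Set

noncomputable section

/-- The open unit disc in `ℂ`. -/
def 𝔻 : Set ℂ := Metric.ball 0 1

/-- `B` is a Blaschke product of degree `m` on the unit disc: a unimodular constant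
times a product of `m` Möbius factors. -/
def IsBlaschke (m : ℕ) (B : ℂ → ℂ) : Prop :=
  ∃ (ω : ℂ) (a : Fin m → ℂ), ‖ω‖ = 1 ∧ (∀ j, a j ∈ 𝔻) ∧
    ∀ z ∈ 𝔻, B z = ω * ∏ j, (a j - z) / (1 - (starRingEnd ℂ) (a j) * z)

variable {E : Type*} [NormedAddCommGroup E] [NormedSpace ℂ E]

/-- The interpolation data `lam j ↦ f (lam j)` is extremally solvable (through `f`):
no map holomorphic on a neighbourhood of the closed unit disc with values in `D`
interpolates `f` at the points `lam j`. -/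
def ExtSolv (D : Set E) {m : ℕ} (lam : Fin m → ℂ) (f : ℂ → E) : Prop :=
  ¬ ∃ (U : Set ℂ) (g : ℂ → E), IsOpen U ∧ Metric.closedBall (0 : ℂ) 1 ⊆ U ∧
      DifferentiableOn ℂ g U ∧ (∀ z ∈ U, g z ∈ D) ∧ ∀ j, g (lam j) = f (lam j)

/-- `f : 𝔻 → D` is a weak `m`-extremal with respect to the distinct points `lam`. -/
def IsWeakExtremal (D : Set E) {m : ℕ} (lam : Fin m → ℂ) (f : ℂ → E) : Prop :=
  DifferentiableOn ℂ f 𝔻 ∧ (∀ z ∈ 𝔻, f z ∈ D) ∧ ExtSolv D lam f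

/-- `f : 𝔻 → D` is `m`-extremal: for all choices of `m` distinct points of `𝔻` the
corresponding interpolation data is extremally solvable. -/
def IsMExtremal (D : Set E) (m : ℕ) (f : ℂ → E) : Prop :=
  DifferentiableOn ℂ f 𝔻 ∧ (∀ z ∈ 𝔻, f z ∈ D) ∧
    ∀ lam : Fin m → ℂ, Function.Injective lam → (∀ j, lam j ∈ 𝔻) → ExtSolv D lam f

/-- The Minkowski functional of a set `D`. -/
def mink (D : Set E) (z : E) : ℝ := sInf {t : ℝ | 0 < t ∧ ((t : ℂ))⁻¹ • z ∈ D}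

/-- `φ` is a holomorphic automorphism of `D`. -/
def IsAutomorphismOf (D : Set E) (φ : E → E) : Prop :=
  DifferentiableOn ℂ φ D ∧ Set.MapsTo φ D D ∧
    ∃ ψ : E → E, DifferentiableOn ℂ ψ D ∧ Set.MapsTo ψ D D ∧
      (∀ z ∈ D, ψ (φ z) = z) ∧ (∀ z ∈ D, φ (ψ z) = z)

/-- The group of holomorphic automorphisms of `D` acts transitively. -/
def Homogeneous (D : Set E) : Prop :=
  ∀ z ∈ D, ∀ w ∈ D, ∃ φ : E → E, IsAutomorphismOf D φ ∧ φ z = w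

/-- `f` is an `m`-complex geodesic of `D`: there is `F ∈ 𝒪(D, 𝔻)` such that `F ∘ f` is a
non-constant Blaschke product of degree at most `m - 1`. -/
def IsComplexGeodesicOfOrder (D : Set E) (m : ℕ) (f : ℂ → E) : Prop :=
  DifferentiableOn ℂ f 𝔻 ∧ (∀ z ∈ 𝔻, f z ∈ D) ∧
    ∃ F : E → ℂ, DifferentiableOn ℂ F D ∧ (∀ z ∈ D, F z ∈ 𝔻) ∧
      ∃ k : ℕ, 1 ≤ k ∧ k ≤ m - 1 ∧ ∃ B : ℂ → ℂ, IsBlaschke k B ∧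
        ∀ z ∈ 𝔻, F (f z) = B z

/-- The sub-mean-value property on circles, for a real function on a subset of `ℂ`. -/
def SubmeanOn (u : ℂ → ℝ) (S : Set ℂ) : Prop :=
  ∀ (c : ℂ) (r : ℝ), 0 < r → Metric.closedBall c r ⊆ S →
    u c ≤ (2 * Real.pi)⁻¹ * ∫ θ in (0:ℝ)..(2 * Real.pi), u (c + r * Complex.exp (θ * Complex.I))

/-- `u` is plurisubharmonic on `D`: upper semicontinuous and submean on every complex line. -/
def PlurisubharmonicOn (u : E → ℝ) (D : Set E) : Prop :=
  UpperSemicontinuousOn u D ∧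
    ∀ (z v : E), SubmeanOn (fun w : ℂ => u (z + w • v)) {w : ℂ | z + w • v ∈ D}

/-- Hartogs pseudoconvexity: `- log dist(·, ∂D)` is plurisubharmonic on `D`. -/
def IsPseudoconvex (D : Set E) : Prop :=
  PlurisubharmonicOn (fun z => - Real.log (Metric.infDist z Dᶜ)) D


/-- The disc `λ ↦ (a₁λ, √(1-a₁²)λ², 0, …, 0)` in `ℂⁿ`, `n ≥ 2`. -/
def f8 (n : ℕ) (hn : 2 ≤ n) (a₁ : ℝ) : ℂ → EuclideanSpace ℂ (Fin n) := fun z =>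
  EuclideanSpace.single (⟨0, by omega⟩ : Fin n) ((a₁ : ℂ) * z) +
    EuclideanSpace.single (⟨1, by omega⟩ : Fin n) (((Real.sqrt (1 - a₁ ^ 2) : ℝ) : ℂ) * z ^ 2)

/-- The left functional `F(z) = z₁²/(2-a₁²) + 2√(1-a₁²)z₂/(2-a₁²)`. -/
def F8 (n : ℕ) (hn : 2 ≤ n) (a₁ : ℝ) : EuclideanSpace ℂ (Fin n) → ℂ := fun z =>
  z (⟨0, by omega⟩ : Fin n) ^ 2 / (2 - (a₁ : ℂ) ^ 2) +
    2 * ((Real.sqrt (1 - a₁ ^ 2) : ℝ) : ℂ) / (2 - (a₁ : ℂ) ^ 2) * z (⟨1, by omega⟩ : Fin n)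

lemma key_ineq (s : ℝ) (hs : 0 ≤ s) (z₁ z₂ : ℂ) (h : ‖z₁‖ ^ 2 + ‖z₂‖ ^ 2 < 1) :
    ‖z₁ ^ 2 + 2 * (s : ℂ) * z₂‖ < 1 + s ^ 2 := by
  have h1 : ‖z₁ ^ 2 + 2 * (s : ℂ) * z₂‖ ≤ ‖z₁‖ ^ 2 + 2 * s * ‖z₂‖ := by
    calc ‖z₁ ^ 2 + 2 * (s : ℂ) * z₂‖ ≤ ‖z₁ ^ 2‖ + ‖2 * (s : ℂ) * z₂‖ := norm_add_le _ _
    _ = ‖z₁‖ ^ 2 + 2 * s * ‖z₂‖ := by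
        rw [norm_pow, norm_mul, norm_mul, Complex.norm_real, Real.norm_eq_abs,
          _root_.abs_of_nonneg hs]
        norm_num
  nlinarith [sq_nonneg (s - ‖z₂‖), norm_nonneg z₂, norm_nonneg z₁]

theorem stmt8 {n : ℕ} (hn : 2 ≤ n) (a₁ : ℝ) (ha : a₁ ∈ Set.Icc (0 : ℝ) 1) :
    Differentiable ℂ (F8 n hn a₁) ∧
    (∀ z ∈ Metric.ball (0 : EuclideanSpace ℂ (Fin n)) 1, F8 n hn a₁ z ∈ 𝔻) ∧
    (∀ z ∈ 𝔻, F8 n hn a₁ (f8 n hn a₁ z) = z ^ 2) ∧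
    IsComplexGeodesicOfOrder (Metric.ball (0 : EuclideanSpace ℂ (Fin n)) 1) 3 (f8 n hn a₁) := by
  obtain ⟨ha0, ha1⟩ := ha
  have hne : (⟨0, by omega⟩ : Fin n) ≠ (⟨1, by omega⟩ : Fin n) := by simp [Fin.ext_iff]
  set s := Real.sqrt (1 - a₁ ^ 2) with hs_def
  have hs0 : 0 ≤ s := Real.sqrt_nonneg _
  have hs2 : s ^ 2 = 1 - a₁ ^ 2 := Real.sq_sqrt (by nlinarith)
  have hs2' : (s : ℂ) ^ 2 = 1 - (a₁ : ℂ) ^ 2 := by exact_mod_cast hs2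
  have hcR : (0 : ℝ) < 2 - a₁ ^ 2 := by nlinarith
  have hc : (2 : ℂ) - (a₁ : ℂ) ^ 2 ≠ 0 := by
    have : ((2 - a₁ ^ 2 : ℝ) : ℂ) ≠ 0 := by exact_mod_cast ne_of_gt hcR
    push_cast at this
    exact this
  -- Part 1 : differentiability of F8
  have hdF : Differentiable ℂ (F8 n hn a₁) := by
    unfold F8
    simp only [div_eq_mul_inv]
    exact (((EuclideanSpace.proj (𝕜 := ℂ) (⟨0, by omega⟩ : Fin n)).differentiable.pow 2).mul_const
        _).add
      ((EuclideanSpace.proj (𝕜 := ℂ) (⟨1, by omega⟩ : Fin n)).differentiable.const_mul _)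
  -- Part 2 : F8 maps the ball into 𝔻
  have hmap : ∀ z ∈ Metric.ball (0 : EuclideanSpace ℂ (Fin n)) 1, F8 n hn a₁ z ∈ 𝔻 := by
    intro z hz
    have hz' : ‖z‖ < 1 := mem_ball_zero_iff.mp hz
    have hsum : ‖z (⟨0, by omega⟩ : Fin n)‖ ^ 2 + ‖z (⟨1, by omega⟩ : Fin n)‖ ^ 2 ≤ ‖z‖ ^ 2 := by
      rw [PiLp.norm_sq_eq_of_L2]
      have hsub : ({⟨0, by omega⟩, ⟨1, by omega⟩} : Finset (Fin n)) ⊆ Finset.univ :=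
        Finset.subset_univ _
      have := Finset.sum_le_sum_of_subset_of_nonneg hsub
        (fun i _ _ => sq_nonneg (‖z i‖))
      rwa [Finset.sum_pair hne] at this
    have hlt : ‖z (⟨0, by omega⟩ : Fin n)‖ ^ 2 + ‖z (⟨1, by omega⟩ : Fin n)‖ ^ 2 < 1 := by
      nlinarith [norm_nonneg z]
    have hF : F8 n hn a₁ z = (z (⟨0, by omega⟩ : Fin n) ^ 2
        + 2 * (s : ℂ) * z (⟨1, by omega⟩ : Fin n)) / ((2 : ℂ) - (a₁ : ℂ) ^ 2) := by
      unfold F8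
      field_simp
      try ring
    have hnc : ‖(2 : ℂ) - (a₁ : ℂ) ^ 2‖ = 2 - a₁ ^ 2 := by
      have : (2 : ℂ) - (a₁ : ℂ) ^ 2 = ((2 - a₁ ^ 2 : ℝ) : ℂ) := by push_cast; ring
      rw [this, Complex.norm_real, Real.norm_eq_abs, abs_of_pos hcR]
    have hk := key_ineq s hs0 (z (⟨0, by omega⟩ : Fin n)) (z (⟨1, by omega⟩ : Fin n)) hlt
    have : ‖F8 n hn a₁ z‖ < 1 := by
      rw [hF, norm_div, hnc, div_lt_one hcR]
      nlinarith
    simpa [𝔻, mem_ball_zero_iff] using this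
  -- Part 3 : F8 ∘ f8 = z ^ 2
  have hcomp : ∀ z ∈ 𝔻, F8 n hn a₁ (f8 n hn a₁ z) = z ^ 2 := by
    intro z _
    unfold F8 f8
    simp only [PiLp.add_apply, EuclideanSpace.single_apply, if_pos rfl,
      if_neg hne, if_neg hne.symm, if_true]
    field_simp
    linear_combination (2 * z ^ 2) * hs2'
  refine ⟨hdF, hmap, hcomp, ?_, ?_, F8 n hn a₁, hdF.differentiableOn, hmap, 2,
    by norm_num, by norm_num, (fun z => z ^ 2), ?_, hcomp⟩
  · -- f8 differentiable on 𝔻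
    have h1 : ∀ (i : Fin n) (c : ℂ), EuclideanSpace.single i c
        = c • EuclideanSpace.single (𝕜 := ℂ) i 1 := by
      intro i c
      ext j
      simp only [EuclideanSpace.single_apply, PiLp.smul_apply, smul_eq_mul]
      split <;> simp
    have he : f8 n hn a₁ = fun z => ((a₁ : ℂ) * z) •
        EuclideanSpace.single (𝕜 := ℂ) (⟨0, by omega⟩ : Fin n) (1 : ℂ) +
        ((s : ℂ) * z ^ 2) • EuclideanSpace.single (𝕜 := ℂ) (⟨1, by omega⟩ : Fin n) (1 : ℂ) := by
      funext z
      unfold f8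
      rw [h1 _ ((a₁ : ℂ) * z), h1 _ ((s : ℂ) * z ^ 2)]
    have : Differentiable ℂ (f8 n hn a₁) := by
      rw [he]
      exact ((differentiable_id.const_mul _).smul_const _).add
        (((differentiable_id.pow 2).const_mul _).smul_const _)
    exact this.differentiableOn
  · -- f8 maps 𝔻 into the ball
    intro z hz
    have hz' : ‖z‖ < 1 := by simpa [𝔻, mem_ball_zero_iff] using hz
    have hcoord : ∀ i : Fin n, ‖f8 n hn a₁ z i‖ ^ 2 =
        (if i = (⟨0, by omega⟩ : Fin n) then ‖(a₁ : ℂ) * z‖ ^ 2 else 0) +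
        (if i = (⟨1, by omega⟩ : Fin n) then ‖(s : ℂ) * z ^ 2‖ ^ 2 else 0) := by
      intro i
      unfold f8
      simp only [PiLp.add_apply, EuclideanSpace.single_apply]
      rcases eq_or_ne i (⟨0, by omega⟩ : Fin n) with h0 | h0 <;>
        rcases eq_or_ne i (⟨1, by omega⟩ : Fin n) with h1 | h1
      · exact absurd (h0 ▸ h1) hne
      · rw [if_pos h0, if_pos h0, if_neg h1, if_neg h1, add_zero, add_zero]
      · rw [if_neg h0, if_neg h0, if_pos h1, if_pos h1, zero_add, zero_add]
      · rw [if_neg h0, if_neg h0, if_neg h1, if_neg h1, add_zero]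
        simp
    have hnormsq : ‖f8 n hn a₁ z‖ ^ 2 = ‖(a₁ : ℂ) * z‖ ^ 2 + ‖(s : ℂ) * z ^ 2‖ ^ 2 := by
      rw [PiLp.norm_sq_eq_of_L2]
      simp only [hcoord]
      rw [Finset.sum_add_distrib, Finset.sum_ite_eq' Finset.univ (⟨0, by omega⟩ : Fin n),
        Finset.sum_ite_eq' Finset.univ (⟨1, by omega⟩ : Fin n)]
      simp
    have hval : ‖f8 n hn a₁ z‖ ^ 2 = a₁ ^ 2 * ‖z‖ ^ 2 + s ^ 2 * ‖z‖ ^ 4 := by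
      rw [hnormsq]
      simp only [norm_mul, norm_pow, Complex.norm_real, Real.norm_eq_abs,
        _root_.abs_of_nonneg ha0, _root_.abs_of_nonneg hs0]
      ring
    have ht : ‖z‖ ^ 2 < 1 := by nlinarith [norm_nonneg z]
    have hlt1 : ‖f8 n hn a₁ z‖ ^ 2 < 1 := by
      rw [hval, hs2]
      nlinarith [norm_nonneg z, sq_nonneg (‖z‖ ^ 2), sq_nonneg a₁,
        mul_nonneg (by nlinarith : (0:ℝ) ≤ 1 - a₁ ^ 2)
          (by nlinarith [sq_nonneg (‖z‖ ^ 2)] : (0:ℝ) ≤ ‖z‖ ^ 2 - ‖z‖ ^ 4)]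
    rw [mem_ball_zero_iff]
    nlinarith [hlt1, norm_nonneg (f8 n hn a₁ z), sq_nonneg (‖f8 n hn a₁ z‖ - 1)]
  · -- z ^ 2 is a Blaschke product of degree 2
    refine ⟨1, fun _ => 0, by norm_num, fun j => by simp [𝔻], fun z _ => ?_⟩
    simp [Fin.prod_univ_two]
    try ring
end
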